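/- Let k > 1, suppose there are more than k schools, all schools have a common priority order, and the set of students is partitioned into sincere students N and sophisticated students M. In equilibrium, SD^k is more fair by stability than β^k: for every such problem (P,≻,q), if a Nash equilibrium of the game (β^k, P) has an outcome that is stable at (P,≻,q), then the (unique) Nash equilibrium outcome SD(P^k_N, P_M, ≻, q) of the game (SD^k, P) is stable at (P,≻,q); moreover, there exists such a problem where the Nash equilibrium outcome of (SD^k, P) is stable at (P,≻,q) but some Nash equilibrium outcome of (β^k, P) is not. -/

import Mathlib

/-!
School choice framework following Bonkoungou–Nesterov,
"Reforms meet fairness concerns in school and college admissions".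

Students `I` and schools `S` are finite types with `|I| > |S|`.
A strict preference relation of a student over `S ∪ {∅}` is represented by a list
of `Option S` containing every element exactly once (earlier = more preferred);
`none` is the outside option.  A strict priority order of a school is a list of
`I` containing every student exactly once (earlier = higher priority).
-/

namespace SchoolChoice

variable {I S : Type*} [Fintype I] [DecidableEq I] [Fintype S] [DecidableEq S]

/-- `p` is a strict preference relation on `S ∪ {∅}`: a ranking list containing every
element of `Option S` exactly once. -/
def ValidPref (p : List (Option S)) : Prop := p.Nodup ∧ ∀ x : Option S, x ∈ p

/-- `pr` is a strict priority order: a ranking list containing every student exactly once. -/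
def ValidPrio (pr : List I) : Prop := pr.Nodup ∧ ∀ i : I, i ∈ pr

/-- `a` is strictly preferred to `b` under the preference relation `p`. -/
def prefLt (p : List (Option S)) (a b : Option S) : Prop := p.idxOf a < p.idxOf b

/-- `i` has strictly higher priority than `j` under the priority order `pr`. -/
def prioLt (pr : List I) (i j : I) : Prop := pr.idxOf i < pr.idxOf j

instance (p : List (Option S)) (a b : Option S) : Decidable (prefLt p a b) :=
  inferInstanceAs (Decidable (_ < _))

instance (pr : List I) (i j : I) : Decidable (prioLt pr i j) :=
  inferInstanceAs (Decidable (_ < _))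

/-- The acceptable schools of `p` (those preferred to the outside option), in preference
order. -/
def acceptables (p : List (Option S)) : List S := (p.takeWhile Option.isSome).filterMap id

/-- The truncation of `p` after its `k`-th acceptable school: the preference relation
listing, in the same order, only the `min k _` most-preferred acceptable schools of `p`,
all other schools being unacceptable (kept below `none` in their original order). -/
def truncate (p : List (Option S)) (k : ℕ) : List (Option S) :=
  ((acceptables p).take k).map some ++
    none :: p.filter (fun x => decide (x ≠ none ∧ x ∉ ((acceptables p).take k).map some))

/-- `μ` is a matching: it respects the capacities `q`. -/
def IsMatching (q : S → ℕ) (μ : I → Option S) : Prop :=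
  ∀ s : S, (Finset.univ.filter (fun i => μ i = some s)).card ≤ q s

/-- The pair `(i, s)` blocks `μ` under the problem `(P, prio, q)`. -/
def Blocks (P : I → List (Option S)) (prio : S → List I) (q : S → ℕ)
    (μ : I → Option S) (i : I) (s : S) : Prop :=
  prefLt (P i) (some s) (μ i) ∧
    ((Finset.univ.filter (fun j => μ j = some s)).card < q s ∨
      ∃ j : I, μ j = some s ∧ prioLt (prio s) i j)

/-- `i` is a blocking student for `μ` under `(P, prio, q)`. -/
def BlockingStudent (P : I → List (Option S)) (prio : S → List I) (q : S → ℕ)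
    (μ : I → Option S) (i : I) : Prop :=
  ∃ s : S, Blocks P prio q μ i s

/-- `μ` is individually rational under `P`. -/
def IndividuallyRational (P : I → List (Option S)) (μ : I → Option S) : Prop :=
  ∀ i : I, ¬ prefLt (P i) none (μ i)

/-- `μ` is stable at `(P, prio, q)`. -/
def IsStable (P : I → List (Option S)) (prio : S → List I) (q : S → ℕ)
    (μ : I → Option S) : Prop :=
  IndividuallyRational P μ ∧ ∀ i : I, ¬ BlockingStudent P prio q μ i

/-- The number of blocking students for `μ` under `(P, prio, q)`. -/
noncomputable def numBlocking (P : I → List (Option S)) (prio : S → List I) (q : S → ℕ)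
    (μ : I → Option S) : ℕ :=
  {i : I | BlockingStudent P prio q μ i}.ncard

/-! ### The Gale–Shapley student-proposing deferred acceptance mechanism

The state `σ : I → ℕ` records, for each student, how many of her acceptable schools
have already rejected her; she currently applies to the `σ i`-th school on her list
(if any).  At each round every school tentatively keeps the `q s` highest-priority
students among its current applicants and rejects the rest, who move on. -/

/-- The school student `i` currently applies to. -/
def daTarget (P : I → List (Option S)) (σ : I → ℕ) (i : I) : Option S :=
  (acceptables (P i))[σ i]?

/-- The students tentatively held by school `s`: the `q s` highest-priority current
applicants. -/
def daHeld (P : I → List (Option S)) (prio : S → List I) (q : S → ℕ)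
    (σ : I → ℕ) (s : S) : List I :=
  ((prio s).filter (fun i => decide (daTarget P σ i = some s))).take (q s)

/-- One round of deferred acceptance: every rejected student moves to her next choice. -/
def daStep (P : I → List (Option S)) (prio : S → List I) (q : S → ℕ)
    (σ : I → ℕ) : I → ℕ := fun i =>
  match daTarget P σ i with
  | none => σ i
  | some s => if i ∈ daHeld P prio q σ s then σ i else σ i + 1

/-- The Gale–Shapley (student-proposing deferred acceptance) mechanism.  Iterating the
round map `|I| * |S| + 1` times is guaranteed to reach the terminal state. -/
def GS (P : I → List (Option S)) (prio : S → List I) (q : S → ℕ) : I → Option S :=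
  fun i =>
    let σ := (daStep P prio q)^[Fintype.card I * Fintype.card S + 1] (fun _ => 0)
    match daTarget P σ i with
    | none => none
    | some s => if i ∈ daHeld P prio q σ s then some s else none

/-- The constrained Gale–Shapley mechanism `GS^k`. -/
def GSk (k : ℕ) (P : I → List (Option S)) (prio : S → List I) (q : S → ℕ) : I → Option S :=
  GS (fun i => truncate (P i) k) prio q

/-! ### The Boston (immediate acceptance) mechanism -/

/-- Round `t` of the Boston mechanism: each not-yet-accepted student applies to her
`t`-th ranked acceptable school (0-indexed), and each school permanently accepts, up to
its remaining capacity, its highest-priority new applicants. -/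
def bostonRound (P : I → List (Option S)) (prio : S → List I) (q : S → ℕ)
    (μ : I → Option S) (t : ℕ) : I → Option S := fun i =>
  match μ i with
  | some s => some s
  | none =>
    match (acceptables (P i))[t]? with
    | none => none
    | some s =>
      if i ∈ ((prio s).filter
            (fun j => decide (μ j = none ∧ (acceptables (P j))[t]? = some s))).take
          (q s - (Finset.univ.filter (fun j => μ j = some s)).card)
      then some s else none

/-- The Boston (immediate acceptance) mechanism. -/
def Boston (P : I → List (Option S)) (prio : S → List I) (q : S → ℕ) : I → Option S :=
  (List.range (Fintype.card S)).foldl (bostonRound P prio q) (fun _ => none)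

/-- The constrained Boston mechanism `β^k`. -/
def Bostonk (k : ℕ) (P : I → List (Option S)) (prio : S → List I) (q : S → ℕ) :
    I → Option S :=
  Boston (fun i => truncate (P i) k) prio q

/-! ### The first-preference-first mechanism -/

/-- The adjusted priority profile: each first-preference-first school (member of `fpf`)
ranks students first by the rank they assign to it under `P` (counting the ranking of the
outside option as well), ties broken by the original priority; equal-preference schools
keep their original priority. -/
def fpfPrio (fpf : Finset S) (P : I → List (Option S)) (prio : S → List I) : S → List I :=
  fun s =>
    if s ∈ fpf then
      (List.range (Fintype.card S + 1)).flatMap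
        (fun r => (prio s).filter (fun i => decide ((P i).idxOf (some s) = r)))
    else prio s

/-- The first-preference-first mechanism with set `fpf` of first-preference-first
schools: Gale–Shapley run on the adjusted priorities. -/
def FPF (fpf : Finset S) (P : I → List (Option S)) (prio : S → List I) (q : S → ℕ) :
    I → Option S :=
  GS P (fpfPrio fpf P prio) q

/-- The constrained first-preference-first mechanism `FPF^k`. -/
def FPFk (fpf : Finset S) (k : ℕ) (P : I → List (Option S)) (prio : S → List I)
    (q : S → ℕ) : I → Option S :=
  FPF fpf (fun i => truncate (P i) k) prio q

/-! ### Manipulation and equilibrium notions -/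

/-- Student `i` is a manipulating student of the mechanism `φ` (with priorities and
capacities fixed) at the true profile `P`. -/
def ManipulatingStudent (φ : (I → List (Option S)) → I → Option S)
    (P : I → List (Option S)) (i : I) : Prop :=
  ∃ Q : List (Option S), ValidPref Q ∧
    prefLt (P i) (φ (Function.update P i Q) i) (φ P i)

/-- The mechanism `φ` is not manipulable at `P`. -/
def NotManipulable (φ : (I → List (Option S)) → I → Option S)
    (P : I → List (Option S)) : Prop :=
  ∀ i : I, ¬ ManipulatingStudent φ P i

/-- `P'` is a Nash equilibrium of the game `(φ, P)` in which the sophisticated students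
are the members of `M` (who may misreport, and best respond) and all other (sincere)
students report truthfully. -/
def NashEq (φ : (I → List (Option S)) → I → Option S) (P : I → List (Option S))
    (M : Finset I) (P' : I → List (Option S)) : Prop :=
  (∀ i, ValidPref (P' i)) ∧ (∀ i ∉ M, P' i = P i) ∧
    ∀ i ∈ M, ∀ Q : List (Option S), ValidPref Q →
      ¬ prefLt (P i) (φ (Function.update P' i Q) i) (φ P' i)

/-! ### Semi-sophisticated students -/

/-- Student `i` is guaranteed her first choice `s`: `s` is her most-preferred acceptable
school and `i` is among the `q s` highest-priority students at `s`. -/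
def GuaranteedFirstChoice (P : I → List (Option S)) (prio : S → List I) (q : S → ℕ)
    (i : I) (s : S) : Prop :=
  (acceptables (P i)).head? = some s ∧ (prio s).idxOf i < q s

instance (P : I → List (Option S)) (prio : S → List I) (q : S → ℕ) (i : I) (s : S) :
    Decidable (GuaranteedFirstChoice P prio q i s) :=
  inferInstanceAs (Decidable (_ ∧ _))

/-- School `s` is competitive: at least `q s` students are guaranteed their first
choice `s`. -/
def Competitive (P : I → List (Option S)) (prio : S → List I) (q : S → ℕ) (s : S) : Prop :=
  q s ≤ (Finset.univ.filter (fun i => GuaranteedFirstChoice P prio q i s)).card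

instance (P : I → List (Option S)) (prio : S → List I) (q : S → ℕ) (s : S) :
    Decidable (Competitive P prio q s) :=
  inferInstanceAs (Decidable (_ ≤ _))

/-- `P'` is a Nash equilibrium of the game `(GS^ℓ, P)` with semi-sophisticated students:
every student guaranteed her first choice reports truthfully; every other student reports
truthfully if she has at most `ℓ` acceptable schools or all her acceptable schools are
competitive, and otherwise lists as acceptable, in the order given by her true preference,
only her acceptable schools that are not competitive. -/
def SemiSophProfile (ℓ : ℕ) (P : I → List (Option S)) (prio : S → List I) (q : S → ℕ)
    (P' : I → List (Option S)) : Prop :=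
  ∀ i : I,
    ((∃ s : S, GuaranteedFirstChoice P prio q i s) → P' i = P i) ∧
    (¬ (∃ s : S, GuaranteedFirstChoice P prio q i s) →
      (((acceptables (P i)).length ≤ ℓ ∨ ∀ s ∈ acceptables (P i), Competitive P prio q s) →
          P' i = P i) ∧
      (¬ ((acceptables (P i)).length ≤ ℓ ∨
            ∀ s ∈ acceptables (P i), Competitive P prio q s) →
          acceptables (P' i) =
            (acceptables (P i)).filter (fun s => decide (¬ Competitive P prio q s))))



set_option linter.unusedSectionVars false

section BEqFacts
variable {α : Type*} [BEq α] [LawfulBEq α]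

lemma idx_cons_self (a : α) (l : List α) : (a :: l).idxOf a = 0 := by
  simp [List.idxOf_cons]

lemma idx_cons_ne {x a : α} (l : List α) (h : x ≠ a) :
    (x :: l).idxOf a = l.idxOf a + 1 := by
  rw [List.idxOf_cons, beq_false_of_ne h]; rfl

lemma idx_lt_length {a : α} {l : List α} (h : a ∈ l) : l.idxOf a < l.length := by
  induction l with
  | nil => simp at h
  | cons x t ih =>
    by_cases hx : x = a
    · subst hx; simp [idx_cons_self]
    · rw [idx_cons_ne _ hx]
      have ht : a ∈ t := by
        rcases List.mem_cons.1 h with h | h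
        · exact absurd h.symm hx
        · exact h
      simpa using ih ht

lemma idx_le_length (a : α) (l : List α) : l.idxOf a ≤ l.length := by
  induction l with
  | nil => simp
  | cons x t ih =>
    by_cases hx : x = a
    · subst hx; simp [idx_cons_self]
    · rw [idx_cons_ne _ hx]; simpa using ih

lemma idx_eq_length_of_not_mem {a : α} {l : List α} (h : a ∉ l) :
    l.idxOf a = l.length := by
  induction l with
  | nil => simp
  | cons x t ih =>
    rw [idx_cons_ne _ (fun hx => h (by rw [hx]; exact List.mem_cons_self))]
    simp [ih (fun ht => h (List.mem_cons_of_mem _ ht))]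

lemma getElem_idx {a : α} {l : List α} (h : l.idxOf a < l.length) : l[l.idxOf a] = a := by
  induction l with
  | nil => simp at h
  | cons x t ih =>
    by_cases hx : x = a
    · subst hx; simp [idx_cons_self]
    · have hidx : (x :: t).idxOf a = t.idxOf a + 1 := idx_cons_ne _ hx
      rw [hidx] at h
      simp only [hidx, List.getElem_cons_succ]
      exact ih (by simpa using h)

lemma idx_getElem {l : List α} (hnd : l.Nodup) {n : ℕ} (hn : n < l.length) :
    l.idxOf l[n] = n := by
  induction l generalizing n with
  | nil => simp at hn
  | cons x t ih =>
    rcases n with _ | n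
    · simpa using idx_cons_self x t
    · have hn' : n < t.length := by simpa using hn
      have hmem : t[n] ∈ t := t.getElem_mem hn'
      have hx : x ≠ t[n] := fun h => (List.nodup_cons.1 hnd).1 (by rw [h]; exact hmem)
      have hg : (x :: t)[n+1] = t[n] := by simp
      rw [hg, idx_cons_ne _ hx, ih (List.nodup_cons.1 hnd).2]

lemma mem_of_idx_lt {l : List α} {a : α} (h : l.idxOf a < l.length) : a ∈ l := by
  by_contra hmem
  rw [idx_eq_length_of_not_mem hmem] at h
  exact lt_irrefl _ h

lemma idx_inj {l : List α} {a b : α} (ha : a ∈ l) (h : l.idxOf a = l.idxOf b) : a = b := by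
  have h1 := getElem_idx (idx_lt_length ha)
  simp only [h] at h1
  have hb : b ∈ l := mem_of_idx_lt (h ▸ idx_lt_length ha)
  rw [← getElem_idx (idx_lt_length hb), h1]

lemma idx_append_left {l₁ l₂ : List α} {a : α} (h : a ∈ l₁) :
    (l₁ ++ l₂).idxOf a = l₁.idxOf a := by
  induction l₁ with
  | nil => simp at h
  | cons x t ih =>
    by_cases hx : x = a
    · subst hx; rw [List.cons_append, idx_cons_self, idx_cons_self]
    · rcases List.mem_cons.1 h with h | h
      · exact absurd h.symm hx
      · rw [List.cons_append, idx_cons_ne _ hx, idx_cons_ne _ hx, ih h]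

lemma idx_append_right {l₁ l₂ : List α} {a : α} (h : a ∉ l₁) :
    (l₁ ++ l₂).idxOf a = l₁.length + l₂.idxOf a := by
  induction l₁ with
  | nil => simp
  | cons x t ih =>
    rw [List.cons_append, idx_cons_ne _ (fun hx => h (by rw [hx]; exact List.mem_cons_self)),
      ih (fun ht => h (List.mem_cons_of_mem _ ht))]
    simp; omega

lemma nodup_indexOf_pairwise {l : List α} (h : l.Nodup) :
    l.Pairwise (fun a b => l.idxOf a < l.idxOf b) := by
  rw [List.pairwise_iff_getElem]
  intro i j hi hj hij
  rw [idx_getElem h hi, idx_getElem h hj]; exact hij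

end BEqFacts

section ListFacts
variable {α : Type*}

lemma pair_sublist_of_take_drop {l : List α} {n : ℕ} {a b : α}
    (ha : a ∈ l.take n) (hb : b ∈ l.drop n) : List.Sublist [a, b] l := by
  have h1 : List.Sublist [a] (l.take n) := List.singleton_sublist.2 ha
  have h2 : List.Sublist [b] (l.drop n) := List.singleton_sublist.2 hb
  have := h1.append h2
  simpa [List.take_append_drop] using this

lemma length_le_of_nodup_subset {l₁ l₂ : List α} (h : l₁.Nodup) (hs : l₁ ⊆ l₂) :
    l₁.length ≤ l₂.length := (h.subperm hs).length_le

lemma idx_map_some [BEq α] [LawfulBEq α] {l : List α} {a : α} :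
    (l.map (some : α → Option α)).idxOf (some a) = l.idxOf a := by
  induction l with
  | nil => rfl
  | cons x t ih =>
    by_cases hx : x = a
    · subst hx; rw [List.map_cons, idx_cons_self, idx_cons_self]
    · rw [List.map_cons, idx_cons_ne _ (by simpa using hx), idx_cons_ne _ hx, ih]

/-- elements of `take q f` all satisfy a predicate that is "upward true" along `f`,
provided at least `q` elements of `f` satisfy it. -/
lemma all_take_of_le_length_filter {f : List α} {h : α → Bool} {q : ℕ}
    (hf : f.Pairwise (fun a b => h b = true → h a = true))
    (hq : q ≤ (f.filter h).length) : ∀ x ∈ f.take q, h x = true := by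
  induction f generalizing q with
  | nil => simp
  | cons y t ih =>
    rcases Nat.eq_zero_or_pos q with rfl | hqpos
    · simp
    obtain ⟨q', rfl⟩ : ∃ q', q = q' + 1 := ⟨q - 1, by omega⟩
    intro x hx
    rw [List.take_succ_cons] at hx
    by_cases hy : h y = true
    · rcases List.mem_cons.1 hx with rfl | h1
      · exact hy
      · refine ih (List.pairwise_cons.1 hf).2 ?_ x h1
        rw [List.filter_cons_of_pos hy] at hq
        simpa using Nat.succ_le_succ_iff.1 hq
    · exfalso
      have hnil : t.filter h = [] := List.filter_eq_nil_iff.2 (fun b hb hhb =>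
        hy ((List.pairwise_cons.1 hf).1 b hb hhb))
      rw [List.filter_cons_of_neg (by simpa using hy), hnil] at hq
      simp at hq

end ListFacts

/-! ### Structure of valid preference lists -/

section PrefFacts
variable {S : Type*} [DecidableEq S]

lemma map_some_filterMap_id {l : List (Option S)} (h : ∀ x ∈ l, x.isSome) :
    (l.filterMap id).map some = l := by
  induction l with
  | nil => rfl
  | cons x t ih =>
    cases x with
    | none => simpa using h none (List.mem_cons_self)
    | some s =>
      rw [List.filterMap_cons]
      simpa using ih (fun x hx => h x (List.mem_cons_of_mem _ hx))

lemma dropWhile_head_false {p : α → Bool} {l : List α} {y : α} {rest : List α}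
    (h : l.dropWhile p = y :: rest) : p y = false := by
  induction l with
  | nil => simp at h
  | cons x t ih =>
    rw [List.dropWhile_cons] at h
    by_cases hx : p x = true
    · rw [if_pos hx] at h; exact ih h
    · rw [if_neg hx] at h
      obtain ⟨rfl, -⟩ := List.cons.injEq .. ▸ h
      · simpa using hx

lemma map_some_acceptables (p : List (Option S)) :
    (acceptables p).map some = p.takeWhile Option.isSome :=
  map_some_filterMap_id (fun _ hx => List.mem_takeWhile_imp hx)

lemma pref_decomp {p : List (Option S)} (hv : ValidPref p) :
    ∃ rest, p = (acceptables p).map some ++ none :: rest := by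
  have hne : p.dropWhile Option.isSome ≠ [] := by
    intro h
    have hmem : none ∈ p := hv.2 none
    rw [← List.takeWhile_append_dropWhile (p := Option.isSome) (l := p), h, List.append_nil] at hmem
    simpa using List.mem_takeWhile_imp hmem
  obtain ⟨y, rest, hy⟩ := List.exists_cons_of_ne_nil hne
  have hyn : y = none := by
    have := dropWhile_head_false hy
    cases y
    · rfl
    · simp at this
  refine ⟨rest, ?_⟩
  rw [map_some_acceptables, ← hyn, ← hy, List.takeWhile_append_dropWhile]

lemma acceptables_nodup {p : List (Option S)} (hv : ValidPref p) :
    (acceptables p).Nodup := by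
  have h1 : ((acceptables p).map some).Nodup := by
    rw [map_some_acceptables]
    exact hv.1.sublist (List.takeWhile_sublist _)
  exact h1.of_map _

lemma idx_none_eq {p : List (Option S)} (hv : ValidPref p) :
    p.idxOf (none : Option S) = (acceptables p).length := by
  obtain ⟨rest, hd⟩ := pref_decomp hv
  conv_lhs => rw [hd]
  rw [idx_append_right (by simp), idx_cons_self]
  simp

lemma idx_some_of_mem {p : List (Option S)} (hv : ValidPref p) {s : S}
    (hs : s ∈ acceptables p) : p.idxOf (some s) = (acceptables p).idxOf s := by
  obtain ⟨rest, hd⟩ := pref_decomp hv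
  conv_lhs => rw [hd]
  rw [idx_append_left (List.mem_map_of_mem hs), idx_map_some]

lemma idx_some_of_not_mem {p : List (Option S)} (hv : ValidPref p) {s : S}
    (hs : s ∉ acceptables p) : (acceptables p).length ≤ p.idxOf (some s) := by
  obtain ⟨rest, hd⟩ := pref_decomp hv
  conv_rhs => rw [hd]
  rw [idx_append_right (by simpa using hs)]
  simp

lemma mem_acceptables_iff_idx {p : List (Option S)} (hv : ValidPref p) {s : S} :
    s ∈ acceptables p ↔ p.idxOf (some s) < (acceptables p).length := by
  constructor
  · intro hs
    rw [idx_some_of_mem hv hs]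
    exact idx_lt_length hs
  · intro h
    by_contra hs
    exact absurd (lt_of_le_of_lt (idx_some_of_not_mem hv hs) h) (lt_irrefl _)

lemma prefLt_some_none {p : List (Option S)} (hv : ValidPref p) {s : S} :
    prefLt p (some s) none ↔ s ∈ acceptables p := by
  unfold prefLt
  rw [idx_none_eq hv, ← mem_acceptables_iff_idx hv]

lemma prefLt_some_some {p : List (Option S)} (hv : ValidPref p) {s t : S}
    (ht : t ∈ acceptables p) :
    prefLt p (some s) (some t) ↔
      s ∈ acceptables p ∧ (acceptables p).idxOf s < (acceptables p).idxOf t := by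
  unfold prefLt
  rw [idx_some_of_mem hv ht]
  constructor
  · intro h
    have hlt : p.idxOf (some s) < (acceptables p).length :=
      lt_of_lt_of_le h (idx_le_length _ _)
    have hs : s ∈ acceptables p := (mem_acceptables_iff_idx hv).2 hlt
    exact ⟨hs, by rwa [idx_some_of_mem hv hs] at h⟩
  · intro ⟨hs, h⟩
    rwa [idx_some_of_mem hv hs]

lemma not_prefLt_none_of_mem {p : List (Option S)} (hv : ValidPref p) {s : S}
    (hs : s ∈ acceptables p) : ¬ prefLt p none (some s) := by
  unfold prefLt
  rw [idx_none_eq hv, idx_some_of_mem hv hs]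
  exact not_lt.2 (le_of_lt (idx_lt_length hs))

lemma not_prefLt_refl {p : List (Option S)} (a : Option S) : ¬ prefLt p a a :=
  lt_irrefl _

/-! ### Truncation -/

lemma takeWhile_isSome_append {l₁ l₂ : List (Option S)}
    (h1 : ∀ y ∈ l₁, Option.isSome y) :
    (l₁ ++ none :: l₂).takeWhile Option.isSome = l₁ := by
  induction l₁ with
  | nil => simp [List.takeWhile_cons]
  | cons x t ih =>
    rw [List.cons_append, List.takeWhile_cons, if_pos (h1 x (List.mem_cons_self)),
      ih (fun y hy => h1 y (List.mem_cons_of_mem _ hy))]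

lemma acceptables_truncate (p : List (Option S)) (k : ℕ) :
    acceptables (truncate p k) = (acceptables p).take k := by
  show ((truncate p k).takeWhile Option.isSome).filterMap id = _
  simp only [truncate]
  rw [takeWhile_isSome_append
    (by intro y hy; obtain ⟨s, -, rfl⟩ := List.mem_map.1 hy; rfl)]
  rw [List.filterMap_map]
  simp [acceptables]

lemma validPref_truncate {p : List (Option S)} (hv : ValidPref p) (k : ℕ) :
    ValidPref (truncate p k) := by
  constructor
  · unfold truncate
    refine List.Nodup.append ?_ ?_ ?_
    · exact List.Nodup.map (Option.some_injective S)
        ((acceptables_nodup hv).sublist (List.take_sublist _ _))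
    · rw [List.nodup_cons]
      refine ⟨?_, hv.1.sublist List.filter_sublist⟩
      intro hmem
      have := List.of_mem_filter hmem
      simp at this
    · intro x hx hy
      rcases List.mem_cons.1 hy with rfl | hy
      · obtain ⟨s, -, hs⟩ := List.mem_map.1 hx
        exact Option.some_ne_none _ hs
      · have := List.of_mem_filter hy
        simp only [decide_eq_true_eq] at this
        exact this.2 hx
  · intro x
    unfold truncate
    by_cases hx : x ∈ ((acceptables p).take k).map some
    · exact List.mem_append_left _ hx
    · refine List.mem_append_right _ ?_
      rcases Decidable.eq_or_ne x none with rfl | hne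
      · exact List.mem_cons_self
      · refine List.mem_cons_of_mem _ (List.mem_filter.2 ⟨hv.2 x, ?_⟩)
        simp only [decide_eq_true_eq]
        exact ⟨hne, hx⟩

lemma idx_take_of_mem {α : Type*} [BEq α] [LawfulBEq α] {l : List α} {k : ℕ} {a : α}
    (h : a ∈ l.take k) : (l.take k).idxOf a = l.idxOf a := by
  conv_rhs => rw [← List.take_append_drop k l]
  rw [idx_append_left h]

end PrefFacts

/-! ### Analysis of the Gale–Shapley mechanism -/

section GSFacts
variable {I S : Type*} [Fintype I] [DecidableEq I] [Fintype S] [DecidableEq S]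
variable (R : I → List (Option S)) (prio : S → List I) (q : S → ℕ)

/-- The DA state after `t` rounds. -/
def daState (t : ℕ) : I → ℕ := (daStep R prio q)^[t] (fun _ => 0)

lemma daHeld_eq (σ : I → ℕ) (s : S) :
    daHeld R prio q σ s =
      ((prio s).filter (fun j => decide (daTarget R σ j = some s))).take (q s) := rfl

lemma daTarget_eq (σ : I → ℕ) (i : I) :
    daTarget R σ i = (acceptables (R i))[σ i]? := rfl

lemma daStep_le (σ : I → ℕ) (i : I) : σ i ≤ daStep R prio q σ i := by
  unfold daStep
  cases h : daTarget R σ i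
  · exact le_refl _
  · dsimp only
    split
    · exact le_refl _
    · exact Nat.le_succ _

lemma daStep_le_succ (σ : I → ℕ) (i : I) : daStep R prio q σ i ≤ σ i + 1 := by
  unfold daStep
  cases h : daTarget R σ i
  · exact Nat.le_succ _
  · dsimp only
    split
    · exact Nat.le_succ _
    · exact le_refl _

lemma daStep_bound {σ : I → ℕ} (i : I) (h : σ i ≤ (acceptables (R i)).length) :
    daStep R prio q σ i ≤ (acceptables (R i)).length := by
  unfold daStep
  cases h' : daTarget R σ i with
  | none => exact h
  | some s =>
    dsimp only
    split
    · exact h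
    · rw [daTarget_eq] at h'
      obtain ⟨hlt, -⟩ := List.getElem?_eq_some_iff.1 h'
      omega

lemma daState_bound (t : ℕ) (i : I) :
    daState R prio q t i ≤ (acceptables (R i)).length := by
  induction t with
  | zero => simp [daState]
  | succ t ih =>
    rw [daState, Function.iterate_succ_apply']
    exact daStep_bound R prio q i ih

lemma sum_lt_of_ne {σ : I → ℕ} (h : daStep R prio q σ ≠ σ) :
    ∑ i, σ i < ∑ i, daStep R prio q σ i := by
  obtain ⟨i, hi⟩ := Function.ne_iff.1 h
  exact Finset.sum_lt_sum (fun i _ => daStep_le R prio q σ i)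
    ⟨i, Finset.mem_univ i, lt_of_le_of_ne (daStep_le R prio q σ i) (Ne.symm hi)⟩

/-- The final (terminal) DA state used by `GS`. -/
def finalDA : I → ℕ := daState R prio q (Fintype.card I * Fintype.card S + 1)

lemma terminal_fixed (hvR : ∀ i, ValidPref (R i)) :
    daStep R prio q (finalDA R prio q) = finalDA R prio q := by
  set N := Fintype.card I * Fintype.card S + 1 with hN
  by_contra hne
  have hall : ∀ t ≤ N, daStep R prio q (daState R prio q t) ≠ daState R prio q t := by
    intro t ht hfix
    apply hne
    have heq : daState R prio q N = daState R prio q t := by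
      have h1 : N = (N - t) + t := by omega
      rw [h1, daState, Function.iterate_add_apply]
      exact Function.iterate_fixed hfix (N - t)
    show daStep R prio q (daState R prio q N) = daState R prio q N
    rw [heq]; exact hfix
  have hsum : ∀ t ≤ N, t ≤ ∑ i, daState R prio q t i := by
    intro t
    induction t with
    | zero => simp
    | succ t ih =>
      intro ht
      have h1 := ih (by omega)
      have h2 := sum_lt_of_ne R prio q (hall t (by omega))
      have h3 : daState R prio q (t+1) = daStep R prio q (daState R prio q t) := by
        rw [daState, Function.iterate_succ_apply']; rfl
      rw [h3]; omega
  have hbound : ∑ i, daState R prio q N i ≤ Fintype.card I * Fintype.card S := by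
    calc ∑ i, daState R prio q N i ≤ ∑ _i : I, Fintype.card S :=
          Finset.sum_le_sum (fun i _ => le_trans (daState_bound R prio q N i)
            ((acceptables_nodup (hvR i)).length_le_card))
      _ = Fintype.card I * Fintype.card S := by
          rw [Finset.sum_const, Finset.card_univ, smul_eq_mul]
  have := hsum N (le_refl N)
  omega

lemma gs_eq (i : I) :
    GS R prio q i =
      match daTarget R (finalDA R prio q) i with
      | none => none
      | some s => if i ∈ daHeld R prio q (finalDA R prio q) s then some s else none := rfl

lemma final_held (hvR : ∀ i, ValidPref (R i)) {i : I} {s : S}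
    (h : daTarget R (finalDA R prio q) i = some s) :
    i ∈ daHeld R prio q (finalDA R prio q) s := by
  by_contra hmem
  have hfix := congrFun (terminal_fixed R prio q hvR) i
  unfold daStep at hfix
  rw [h] at hfix
  dsimp only at hfix
  rw [if_neg hmem] at hfix
  omega

lemma gs_some_iff (hvR : ∀ i, ValidPref (R i)) {i : I} {s : S} :
    GS R prio q i = some s ↔ daTarget R (finalDA R prio q) i = some s := by
  rw [gs_eq]
  constructor
  · intro h
    cases h' : daTarget R (finalDA R prio q) i with
    | none => rw [h'] at h; simp at h
    | some s' =>
      rw [h'] at h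
      dsimp only at h
      rw [if_pos (final_held R prio q hvR h')] at h
      exact h
  · intro h
    rw [h]
    dsimp only
    rw [if_pos (final_held R prio q hvR h)]

lemma gs_none_iff (hvR : ∀ i, ValidPref (R i)) {i : I} :
    GS R prio q i = none ↔ daTarget R (finalDA R prio q) i = none := by
  constructor
  · intro h
    by_contra hne
    obtain ⟨s, hs⟩ := Option.ne_none_iff_exists'.1 hne
    have h2 := (gs_some_iff R prio q hvR).2 hs
    rw [h] at h2
    exact Option.some_ne_none _ h2.symm
  · intro h
    rw [gs_eq, h]

lemma gs_filter_eq (hvR : ∀ i, ValidPref (R i)) (hvprio : ∀ s, ValidPrio (prio s)) (s : S) :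
    Finset.univ.filter (fun j => GS R prio q j = some s) =
      ((prio s).filter (fun j => decide (daTarget R (finalDA R prio q) j = some s))).toFinset := by
  ext j
  simp only [Finset.mem_filter, Finset.mem_univ, true_and, List.mem_toFinset, List.mem_filter,
    decide_eq_true_eq]
  rw [gs_some_iff R prio q hvR]
  exact ⟨fun h => ⟨(hvprio s).2 j, h⟩, fun h => h.2⟩

lemma gs_card_eq (hvR : ∀ i, ValidPref (R i)) (hvprio : ∀ s, ValidPrio (prio s)) (s : S) :
    (Finset.univ.filter (fun j => GS R prio q j = some s)).card =
      ((prio s).filter (fun j => decide (daTarget R (finalDA R prio q) j = some s))).length := by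
  rw [gs_filter_eq R prio q hvR hvprio s]
  exact List.toFinset_card_of_nodup ((hvprio s).1.filter _)

lemma final_filter_le (hvR : ∀ i, ValidPref (R i)) (hvprio : ∀ s, ValidPrio (prio s)) (s : S) :
    ((prio s).filter (fun j => decide (daTarget R (finalDA R prio q) j = some s))).length ≤ q s := by
  set f := (prio s).filter (fun j => decide (daTarget R (finalDA R prio q) j = some s)) with hf
  have hsub : f ⊆ f.take (q s) := by
    intro j hj
    have hj' : daTarget R (finalDA R prio q) j = some s := by
      simpa using (List.mem_filter.1 hj).2
    exact final_held R prio q hvR hj'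
  have h1 := length_le_of_nodup_subset ((hvprio s).1.filter _) hsub
  calc f.length ≤ (f.take (q s)).length := h1
    _ ≤ q s := by simp

theorem gs_matching (hvR : ∀ i, ValidPref (R i)) (hvprio : ∀ s, ValidPrio (prio s)) :
    IsMatching q (GS R prio q) := by
  intro s
  rw [gs_card_eq R prio q hvR hvprio s]
  exact final_filter_le R prio q hvR hvprio s

/-- The key DA invariant: at least `q s` students applying to `s` have higher
priority than `i`. -/
def AInv (σ : I → ℕ) (s : S) (i : I) : Prop :=
  q s ≤ (((prio s).filter (fun j => decide (daTarget R σ j = some s))).filter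
      (fun j => decide (prioLt (prio s) j i))).length

lemma ainv_of_rejected (hvprio : ∀ s, ValidPrio (prio s)) {σ : I → ℕ} {i : I} {s : S}
    (ht : daTarget R σ i = some s) (hrej : i ∉ daHeld R prio q σ s) :
    AInv R prio q σ s i := by
  set f := (prio s).filter (fun j => decide (daTarget R σ j = some s)) with hf
  have hif : i ∈ f := List.mem_filter.2 ⟨(hvprio s).2 i, by simpa using ht⟩
  have hidrop : i ∈ f.drop (q s) := by
    have : i ∈ f.take (q s) ++ f.drop (q s) := by rw [List.take_append_drop]; exact hif
    rcases List.mem_append.1 this with h | h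
    · exact absurd h hrej
    · exact h
  have hbeats : ∀ x ∈ f.take (q s), prioLt (prio s) x i := by
    intro x hx
    have hsub : List.Sublist [x, i] (prio s) :=
      (pair_sublist_of_take_drop hx hidrop).trans List.filter_sublist
    have hpw := (nodup_indexOf_pairwise (hvprio s).1).sublist hsub
    exact (List.pairwise_cons.1 hpw).1 i (List.mem_singleton_self i)
  have hlenf : q s ≤ f.length := by
    by_contra h
    push_neg at h
    rw [List.drop_eq_nil_of_le (le_of_lt h)] at hidrop
    simp at hidrop
  have hsubg : f.take (q s) ⊆ f.filter (fun j => decide (prioLt (prio s) j i)) := by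
    intro x hx
    exact List.mem_filter.2 ⟨List.mem_of_mem_take hx, by simpa using hbeats x hx⟩
  have hnd : (f.take (q s)).Nodup := ((hvprio s).1.filter _).sublist (List.take_sublist _ _)
  have := length_le_of_nodup_subset hnd hsubg
  unfold AInv
  rw [← hf]
  rwa [List.length_take, min_eq_left hlenf] at this

lemma ainv_step (hvprio : ∀ s, ValidPrio (prio s)) {σ : I → ℕ} {s : S} {i : I}
    (h : AInv R prio q σ s i) : AInv R prio q (daStep R prio q σ) s i := by
  set f := (prio s).filter (fun j => decide (daTarget R σ j = some s)) with hf
  have hfnd : f.Nodup := (hvprio s).1.filter _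
  have hpair : f.Pairwise (fun a b =>
      decide (prioLt (prio s) b i) = true → decide (prioLt (prio s) a i) = true) := by
    have h1 := (nodup_indexOf_pairwise (hvprio s).1).sublist
        (List.filter_sublist (l := prio s) (p := fun j => decide (daTarget R σ j = some s)))
    refine h1.imp ?_
    intro a b hab hb
    simp only [decide_eq_true_eq, prioLt] at *
    exact decide_eq_true (lt_trans hab (of_decide_eq_true hb))
  have hq : q s ≤ (f.filter (fun j => decide (prioLt (prio s) j i))).length := h
  have hall := all_take_of_le_length_filter hpair hq
  have hlenf : q s ≤ f.length :=
    le_trans hq (List.Sublist.length_le List.filter_sublist)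
  have hsub : f.take (q s) ⊆
      ((prio s).filter (fun j => decide (daTarget R (daStep R prio q σ) j = some s))).filter
        (fun j => decide (prioLt (prio s) j i)) := by
    intro x hx
    have hxf := List.mem_of_mem_take hx
    have hxt : daTarget R σ x = some s := by simpa using (List.mem_filter.1 hxf).2
    have hxheld : x ∈ daHeld R prio q σ s := by rw [daHeld_eq]; exact hx
    have hstep : daStep R prio q σ x = σ x := by
      unfold daStep
      rw [hxt]
      dsimp only
      rw [if_pos hxheld]
    have hxt' : daTarget R (daStep R prio q σ) x = some s := by
      rw [daTarget_eq, hstep, ← daTarget_eq]; exact hxt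
    exact List.mem_filter.2 ⟨List.mem_filter.2 ⟨(hvprio s).2 x, by simpa using hxt'⟩,
      hall x hx⟩
  have hnd : (f.take (q s)).Nodup := hfnd.sublist (List.take_sublist _ _)
  have hle := length_le_of_nodup_subset hnd hsub
  unfold AInv
  rw [List.length_take, min_eq_left hlenf] at hle
  exact hle

lemma ainv_iterate (hvprio : ∀ s, ValidPrio (prio s)) {σ : I → ℕ} {s : S} {i : I} (n : ℕ)
    (h : AInv R prio q σ s i) : AInv R prio q ((daStep R prio q)^[n] σ) s i := by
  induction n with
  | zero => exact h
  | succ n ih =>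
    rw [Function.iterate_succ_apply']
    exact ainv_step R prio q hvprio ih

lemma nat_traj {g : ℕ → ℕ} (hmono : ∀ t, g t ≤ g (t+1)) (hstep : ∀ t, g (t+1) ≤ g t + 1)
    {j N : ℕ} (h0 : g 0 ≤ j) (hN : j < g N) : ∃ t, t < N ∧ g t = j ∧ g (t+1) = j + 1 := by
  induction N with
  | zero => omega
  | succ N ih =>
    by_cases hj : j < g N
    · obtain ⟨t, ht, h⟩ := ih hj
      exact ⟨t, by omega, h⟩
    · push_neg at hj
      have h1 := hstep N
      exact ⟨N, by omega, by omega, by omega⟩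

lemma ainv_final (hvR : ∀ i, ValidPref (R i)) (hvprio : ∀ s, ValidPrio (prio s))
    {i : I} {j : ℕ} (hj : j < finalDA R prio q i)
    (hjlen : j < (acceptables (R i)).length) :
    AInv R prio q (finalDA R prio q) ((acceptables (R i))[j]) i := by
  set N := Fintype.card I * Fintype.card S + 1 with hN
  have hmono : ∀ t, daState R prio q t i ≤ daState R prio q (t+1) i := by
    intro t
    have h3 : daState R prio q (t+1) = daStep R prio q (daState R prio q t) := by
      rw [daState, Function.iterate_succ_apply']; rfl
    rw [h3]; exact daStep_le R prio q _ i
  have hstep : ∀ t, daState R prio q (t+1) i ≤ daState R prio q t i + 1 := by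
    intro t
    have h3 : daState R prio q (t+1) = daStep R prio q (daState R prio q t) := by
      rw [daState, Function.iterate_succ_apply']; rfl
    rw [h3]; exact daStep_le_succ R prio q _ i
  obtain ⟨t, htN, h1, h2⟩ := nat_traj hmono hstep (by simp [daState]) hj
  set σ := daState R prio q t with hσ
  have h3 : daState R prio q (t+1) = daStep R prio q σ := by
    rw [daState, Function.iterate_succ_apply']; rfl
  have hne : daStep R prio q σ i = σ i + 1 := by rw [← h3, h2, ← h1]
  have htarget : daTarget R σ i = some ((acceptables (R i))[j]) := by
    rw [daTarget_eq, h1]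
    exact List.getElem?_eq_getElem hjlen
  have hrej : i ∉ daHeld R prio q σ ((acceptables (R i))[j]) := by
    intro hmem
    unfold daStep at hne
    rw [htarget] at hne
    dsimp only at hne
    rw [if_pos hmem] at hne
    omega
  have hainv := ainv_of_rejected R prio q hvprio htarget hrej
  have hfinal : finalDA R prio q = (daStep R prio q)^[N - t] σ := by
    rw [hσ, daState, ← Function.iterate_add_apply]
    have : N - t + t = N := by omega
    rw [this]
    rfl
  rw [hfinal]
  exact ainv_iterate R prio q hvprio _ hainv

lemma gs_no_block (hvR : ∀ i, ValidPref (R i)) (hvprio : ∀ s, ValidPrio (prio s))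
    {i : I} {s : S} (hainv : AInv R prio q (finalDA R prio q) s i) :
    q s ≤ (Finset.univ.filter (fun j => GS R prio q j = some s)).card ∧
      ∀ j, GS R prio q j = some s → prioLt (prio s) j i := by
  set f := (prio s).filter (fun j => decide (daTarget R (finalDA R prio q) j = some s)) with hf
  set g := f.filter (fun j => decide (prioLt (prio s) j i)) with hg
  have h1 : g.length ≤ f.length := List.Sublist.length_le List.filter_sublist
  have h2 : f.length ≤ q s := final_filter_le R prio q hvR hvprio s
  have hcard : (Finset.univ.filter (fun j => GS R prio q j = some s)).card = f.length :=
    gs_card_eq R prio q hvR hvprio s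
  have hqg : q s ≤ g.length := hainv
  have hmain : q s ≤ f.length := le_trans hqg h1
  constructor
  · rw [hcard]; exact hmain
  · have hgf : g = f := (List.filter_sublist (l := f)).eq_of_length (le_antisymm h1 (le_trans h2 hqg))
    intro j hj
    have hjf : j ∈ f := by
      rw [hf]
      exact List.mem_filter.2 ⟨(hvprio s).2 j,
        by simpa using (gs_some_iff R prio q hvR).1 hj⟩
    rw [← hgf] at hjf
    simpa using (List.mem_filter.1 hjf).2

theorem gs_stable (hvR : ∀ i, ValidPref (R i)) (hvprio : ∀ s, ValidPrio (prio s)) :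
    IsStable R prio q (GS R prio q) := by
  constructor
  · intro i
    cases hμ : GS R prio q i with
    | none => exact not_prefLt_refl _
    | some s =>
      have ht := (gs_some_iff R prio q hvR).1 hμ
      rw [daTarget_eq] at ht
      obtain ⟨hlt, hget⟩ := List.getElem?_eq_some_iff.1 ht
      have hs : s ∈ acceptables (R i) := hget ▸ (acceptables (R i)).getElem_mem hlt
      exact not_prefLt_none_of_mem (hvR i) hs
  · rintro i ⟨s, hpref, hor⟩
    have hA := acceptables_nodup (hvR i)
    obtain ⟨j, hjlen, hjfin, hjeq⟩ :
        ∃ j, ∃ (hjl : j < (acceptables (R i)).length), j < finalDA R prio q i ∧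
          (acceptables (R i))[j] = s := by
      cases hμ : GS R prio q i with
      | some t =>
        have ht := (gs_some_iff R prio q hvR).1 hμ
        rw [daTarget_eq] at ht
        obtain ⟨hlt, hget⟩ := List.getElem?_eq_some_iff.1 ht
        have htmem : t ∈ acceptables (R i) := hget ▸ (acceptables (R i)).getElem_mem hlt
        rw [hμ] at hpref
        obtain ⟨hsmem, hidx⟩ := (prefLt_some_some (hvR i) htmem).1 hpref
        have hidxeq : (acceptables (R i)).idxOf t = finalDA R prio q i := by
          rw [← hget]
          exact idx_getElem hA hlt
        refine ⟨(acceptables (R i)).idxOf s, idx_lt_length hsmem, ?_,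
          getElem_idx (idx_lt_length hsmem)⟩
        rw [← hidxeq]; exact hidx
      | none =>
        have ht := (gs_none_iff R prio q hvR).1 hμ
        rw [daTarget_eq] at ht
        have hlen : (acceptables (R i)).length ≤ finalDA R prio q i := by
          by_contra hc
          push_neg at hc
          rw [List.getElem?_eq_getElem hc] at ht
          exact Option.some_ne_none _ ht
        rw [hμ] at hpref
        have hsmem := (prefLt_some_none (hvR i)).1 hpref
        exact ⟨(acceptables (R i)).idxOf s, idx_lt_length hsmem,
          lt_of_lt_of_le (idx_lt_length hsmem) hlen,
          getElem_idx (idx_lt_length hsmem)⟩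
    have hainv := ainv_final R prio q hvR hvprio hjfin hjlen
    rw [hjeq] at hainv
    obtain ⟨hc, hall⟩ := gs_no_block R prio q hvR hvprio hainv
    rcases hor with hor | ⟨j', hj', hlt⟩
    · omega
    · have := hall j' hj'
      unfold prioLt at this hlt
      omega

end GSFacts

/-! ### Uniqueness of stable matchings under a common priority -/

section Unique
variable {I S : Type*} [Fintype I] [DecidableEq I] [Fintype S] [DecidableEq S]
variable {R : I → List (Option S)} {prio : S → List I} {q : S → ℕ}

lemma stable_aux (hvR : ∀ i, ValidPref (R i)) (hvprio : ∀ s, ValidPrio (prio s))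
    {μ ν : I → Option S} (hμm : IsMatching q μ) (hνs : IsStable R prio q ν)
    {i : I} (IH : ∀ j s, prioLt (prio s) j i → μ j = ν j)
    (hlt : prefLt (R i) (μ i) (ν i)) (hne : μ i ≠ ν i) : False := by
  cases hμi : μ i with
  | none =>
    rw [hμi] at hlt
    exact hνs.1 i hlt
  | some s =>
    rw [hμi] at hlt
    have hnblk : ¬ Blocks R prio q ν i s := fun hb => hνs.2 i ⟨s, hb⟩
    rw [Blocks] at hnblk
    push_neg at hnblk
    obtain ⟨hcap, hocc⟩ := hnblk hlt
    have hνine : ν i ≠ some s := fun h => hne (by rw [hμi, h])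
    have hsub : Finset.univ.filter (fun j => ν j = some s) ⊆
        Finset.univ.filter (fun j => μ j = some s) := by
      intro j hj
      simp only [Finset.mem_filter, Finset.mem_univ, true_and] at hj ⊢
      have hji : j ≠ i := by rintro rfl; exact hνine hj
      have hidx : (prio s).idxOf j ≠ (prio s).idxOf i :=
        fun h => hji (idx_inj ((hvprio s).2 j) h)
      have hjlt : prioLt (prio s) j i := by
        have := hocc j hj
        unfold prioLt at this ⊢
        omega
      rw [IH j s hjlt]; exact hj
    have hiμ : i ∈ Finset.univ.filter (fun j => μ j = some s) := by simp [hμi]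
    have hiν : i ∉ Finset.univ.filter (fun j => ν j = some s) := by simp [hνine]
    have hcard : (Finset.univ.filter (fun j => ν j = some s)).card <
        (Finset.univ.filter (fun j => μ j = some s)).card :=
      Finset.card_lt_card ⟨hsub, fun hback => hiν (hback hiμ)⟩
    have h5 := hμm s
    omega

theorem stable_unique (hvR : ∀ i, ValidPref (R i)) (hvprio : ∀ s, ValidPrio (prio s))
    (hcommon : ∀ s s' : S, prio s = prio s')
    {μ ν : I → Option S} (hμs : IsStable R prio q μ) (hμm : IsMatching q μ)
    (hνs : IsStable R prio q ν) (hνm : IsMatching q ν) : μ = ν := by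
  rcases isEmpty_or_nonempty S with hS | hS
  · funext i
    cases hμi : μ i with
    | some s => exact (hS.false s).elim
    | none =>
      cases hνi : ν i with
      | some s => exact (hS.false s).elim
      | none => rfl
  · obtain ⟨s₀⟩ := hS
    suffices h : ∀ n, ∀ i : I, (prio s₀).idxOf i < n → μ i = ν i by
      funext i
      exact h ((prio s₀).idxOf i + 1) i (by omega)
    intro n
    induction n with
    | zero => intro i h; omega
    | succ n ih =>
      intro i hi
      by_contra hne
      have IH : ∀ j s, prioLt (prio s) j i → μ j = ν j := by
        intro j s hj
        rw [hcommon s s₀] at hj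
        unfold prioLt at hj
        exact ih j (by omega)
      have hμmem : μ i ∈ R i := (hvR i).2 _
      have hidxne : (R i).idxOf (μ i) ≠ (R i).idxOf (ν i) :=
        fun h => hne (idx_inj hμmem h)
      rcases lt_or_gt_of_ne hidxne with h | h
      · exact stable_aux hvR hvprio hμm hνs IH h hne
      · exact stable_aux hvR hvprio hνm hμs (fun j s hj => (IH j s hj).symm) h
          (fun hh => hne hh.symm)

end Unique

/-! ### Basic properties of the Boston mechanism -/

section BostonFacts
variable {I S : Type*} [Fintype I] [DecidableEq I] [Fintype S] [DecidableEq S]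
variable (R : I → List (Option S)) (prio : S → List I) (q : S → ℕ)

lemma bostonRound_some (μ : I → Option S) (t : ℕ) {i : I} {s : S}
    (h : μ i = some s) : bostonRound R prio q μ t i = some s := by
  unfold bostonRound
  rw [h]

lemma boston_foldl_some (l : List ℕ) {μ : I → Option S} {i : I} {s : S}
    (h : μ i = some s) : (l.foldl (bostonRound R prio q) μ) i = some s := by
  induction l generalizing μ with
  | nil => exact h
  | cons t ts ih =>
    rw [List.foldl_cons]
    exact ih (bostonRound_some R prio q μ t h)

lemma bostonRound_some_cases {μ : I → Option S} {t : ℕ} {i : I} {s : S}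
    (h : bostonRound R prio q μ t i = some s) :
    μ i = some s ∨ (μ i = none ∧ (acceptables (R i))[t]? = some s ∧
      i ∈ ((prio s).filter
            (fun j => decide (μ j = none ∧ (acceptables (R j))[t]? = some s))).take
          (q s - (Finset.univ.filter (fun j => μ j = some s)).card)) := by
  unfold bostonRound at h
  cases hμ : μ i with
  | some s' =>
    rw [hμ] at h
    left
    exact h
  | none =>
    rw [hμ] at h
    cases hg : (acceptables (R i))[t]? with
    | none =>
      rw [hg] at h
      exact nomatch h
    | some s' =>
      rw [hg] at h
      dsimp only at h
      split at h
      · obtain rfl : s' = s := Option.some.inj h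
        right
        exact ⟨rfl, rfl, by assumption⟩
      · exact nomatch h

lemma boston_acceptable :
    ∀ i s, Boston R prio q i = some s → s ∈ acceptables (R i) := by
  suffices hgen : ∀ (l : List ℕ) (μ0 : I → Option S),
      (∀ i s, μ0 i = some s → s ∈ acceptables (R i)) →
      ∀ i s, (l.foldl (bostonRound R prio q) μ0) i = some s → s ∈ acceptables (R i) by
    intro i s h
    exact hgen (List.range (Fintype.card S)) (fun _ => none)
      (by intro i s h'; exact nomatch h') i s h
  intro l
  induction l with
  | nil => intro μ0 h; exact h
  | cons t ts ih =>
    intro μ0 h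
    rw [List.foldl_cons]
    apply ih
    intro j s' hj
    rcases bostonRound_some_cases R prio q hj with h1 | ⟨-, hg, -⟩
    · exact h j s' h1
    · obtain ⟨hlt, rfl⟩ := List.getElem?_eq_some_iff.1 hg
      exact (acceptables (R j)).getElem_mem hlt

lemma bostonRound_matching {μ : I → Option S} (hm : IsMatching q μ) (t : ℕ) :
    IsMatching q (bostonRound R prio q μ t) := by
  intro s
  set AL := ((prio s).filter
      (fun j => decide (μ j = none ∧ (acceptables (R j))[t]? = some s))).take
      (q s - (Finset.univ.filter (fun j => μ j = some s)).card) with hAL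
  have hsub : Finset.univ.filter (fun j => bostonRound R prio q μ t j = some s) ⊆
      (Finset.univ.filter (fun j => μ j = some s)) ∪ AL.toFinset := by
    intro j hj
    simp only [Finset.mem_filter, Finset.mem_univ, true_and] at hj
    rcases bostonRound_some_cases R prio q hj with h1 | ⟨-, -, hmem⟩
    · exact Finset.mem_union_left _ (by simp [h1])
    · exact Finset.mem_union_right _ (List.mem_toFinset.2 hmem)
  have h1 := Finset.card_le_card hsub
  have h2 := Finset.card_union_le (Finset.univ.filter (fun j => μ j = some s)) AL.toFinset
  have h3 : AL.toFinset.card ≤ AL.length := List.toFinset_card_le _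
  have h4 : AL.length ≤ q s - (Finset.univ.filter (fun j => μ j = some s)).card := by
    rw [hAL]
    exact List.length_take_le _ _
  have h5 := hm s
  omega

lemma boston_matching : IsMatching q (Boston R prio q) := by
  suffices hgen : ∀ (l : List ℕ) (μ0 : I → Option S), IsMatching q μ0 →
      IsMatching q (l.foldl (bostonRound R prio q) μ0) by
    apply hgen
    intro s
    simp [IsMatching]
  intro l
  induction l with
  | nil => intro μ0 h; exact h
  | cons t ts ih =>
    intro μ0 h
    rw [List.foldl_cons]
    exact ih _ (bostonRound_matching R prio q h t)

end BostonFacts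

/-! ### Part 1: in equilibrium `SD^k` is more stable than `β^k` -/

section Part1
variable {I S : Type*} [Fintype I] [DecidableEq I] [Fintype S] [DecidableEq S]

theorem sdk_part1 (k : ℕ)
    (M : Finset I) (P : I → List (Option S)) (prio : S → List I) (q : S → ℕ)
    (hvP : ∀ i, ValidPref (P i)) (hvprio : ∀ s, ValidPrio (prio s))
    (hcommon : ∀ s s' : S, prio s = prio s')
    (hex : ∃ P' : I → List (Option S),
        NashEq (fun R => Bostonk k R prio q) P M P' ∧
        IsStable P prio q (Bostonk k P' prio q)) :
    IsStable P prio q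
      (GS (fun i => if i ∈ M then P i else truncate (P i) k) prio q) := by
  obtain ⟨P', hNash, hstable⟩ := hex
  set R' : I → List (Option S) := fun i => truncate (P' i) k with hR'
  have hν : Bostonk k P' prio q = Boston R' prio q := rfl
  rw [hν] at hstable
  have hνm : IsMatching q (Boston R' prio q) := boston_matching R' prio q
  have hμs : IsStable P prio q (GS P prio q) := gs_stable P prio q hvP hvprio
  have hμm : IsMatching q (GS P prio q) := gs_matching P prio q hvP hvprio
  have huniq : GS P prio q = Boston R' prio q :=
    stable_unique hvP hvprio hcommon hμs hμm hstable hνm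
  have hacc : ∀ i ∉ M, ∀ s, GS P prio q i = some s → s ∈ (acceptables (P i)).take k := by
    intro i hi s h
    rw [huniq] at h
    have h2 := boston_acceptable R' prio q i s h
    have hR'i : R' i = truncate (P i) k := by
      rw [hR']
      dsimp only
      rw [hNash.2.1 i hi]
    rw [hR'i, acceptables_truncate] at h2
    exact h2
  set Pt : I → List (Option S) := fun i => if i ∈ M then P i else truncate (P i) k with hPt
  have hPti : ∀ i, i ∈ M → Pt i = P i := by
    intro i hi; rw [hPt]; dsimp only; rw [if_pos hi]
  have hPti' : ∀ i, i ∉ M → Pt i = truncate (P i) k := by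
    intro i hi; rw [hPt]; dsimp only; rw [if_neg hi]
  have hvPt : ∀ i, ValidPref (Pt i) := by
    intro i
    by_cases hi : i ∈ M
    · rw [hPti i hi]; exact hvP i
    · rw [hPti' i hi]; exact validPref_truncate (hvP i) k
  have hstPt : IsStable Pt prio q (GS P prio q) := by
    constructor
    · intro i
      by_cases hi : i ∈ M
      · rw [hPti i hi]; exact hμs.1 i
      · rw [hPti' i hi]
        cases hμi : GS P prio q i with
        | none => exact not_prefLt_refl _
        | some s =>
          have hs := hacc i hi s hμi
          have hs' : s ∈ acceptables (truncate (P i) k) := by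
            rw [acceptables_truncate]; exact hs
          exact not_prefLt_none_of_mem (validPref_truncate (hvP i) k) hs'
    · rintro i ⟨s, hpref, hor⟩
      by_cases hi : i ∈ M
      · rw [hPti i hi] at hpref
        exact hμs.2 i ⟨s, hpref, hor⟩
      · rw [hPti' i hi] at hpref
        have hvT := validPref_truncate (hvP i) k
        cases hμi : GS P prio q i with
        | none =>
          rw [hμi] at hpref
          have hs := (prefLt_some_none hvT).1 hpref
          rw [acceptables_truncate] at hs
          have hsA : s ∈ acceptables (P i) := List.mem_of_mem_take hs
          exact hμs.2 i ⟨s, by rw [hμi]; exact (prefLt_some_none (hvP i)).2 hsA, hor⟩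
        | some t =>
          rw [hμi] at hpref
          have ht := hacc i hi t hμi
          have ht' : t ∈ acceptables (truncate (P i) k) := by
            rw [acceptables_truncate]; exact ht
          obtain ⟨hsmem, hidx⟩ := (prefLt_some_some hvT ht').1 hpref
          rw [acceptables_truncate] at hsmem hidx
          have hsA : s ∈ acceptables (P i) := List.mem_of_mem_take hsmem
          have htA : t ∈ acceptables (P i) := List.mem_of_mem_take ht
          rw [idx_take_of_mem hsmem, idx_take_of_mem ht] at hidx
          exact hμs.2 i ⟨s, by
            rw [hμi]
            exact (prefLt_some_some (hvP i) htA).2 ⟨hsA, hidx⟩, hor⟩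
  have huniq2 : GS Pt prio q = GS P prio q :=
    stable_unique hvPt hvprio hcommon (gs_stable Pt prio q hvPt hvprio)
      (gs_matching Pt prio q hvPt hvprio) hstPt hμm
  show IsStable P prio q (GS Pt prio q)
  rw [huniq2]
  exact hμs

end Part1

/-! ### Part 2: the counterexample -/

section Part2
variable {I S : Type*} [Fintype I] [DecidableEq I] [Fintype S] [DecidableEq S]

/-- The matching used in the counterexample. -/
def xiMatch (a b : I) (s1 s2 : S) : I → Option S :=
  fun i => if i = a then some s1 else if i = b then some s2 else none

lemma xi_filter (a b : I) (s1 s2 : S) (hab : a ≠ b) (hs : s1 ≠ s2) (s : S) :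
    Finset.univ.filter (fun j => xiMatch a b s1 s2 j = some s) =
      if s = s1 then {a} else if s = s2 then {b} else ∅ := by
  ext j
  simp only [Finset.mem_filter, Finset.mem_univ, true_and]
  simp only [xiMatch]
  by_cases hja : j = a
  · subst hja
    rw [if_pos rfl]
    by_cases h1 : s = s1
    · subst h1; simp
    · rw [if_neg h1]
      constructor
      · intro h; exact absurd (Option.some.inj h).symm h1
      · intro h
        split at h <;> simp_all
  · rw [if_neg hja]
    by_cases hjb : j = b
    · subst hjb
      rw [if_pos rfl]
      by_cases h1 : s = s1
      · subst h1
        rw [if_pos rfl]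
        constructor
        · intro h; exact absurd (Option.some.inj h).symm hs
        · intro h; exact absurd (Finset.mem_singleton.1 h) (Ne.symm hab)
      · rw [if_neg h1]
        by_cases h2 : s = s2
        · subst h2; simp
        · rw [if_neg h2]
          constructor
          · intro h; exact absurd (Option.some.inj h).symm h2
          · intro h; simp at h
    · rw [if_neg hjb]
      constructor
      · intro h; exact nomatch h
      · intro h
        split at h
        · exact absurd (Finset.mem_singleton.1 h) hja
        · split at h
          · exact absurd (Finset.mem_singleton.1 h) hjb
          · simp at h

lemma xi_matching (a b : I) (s1 s2 : S) (hab : a ≠ b) (hs : s1 ≠ s2)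
    (q : S → ℕ) (hq1 : q s1 = 1) (hq2 : q s2 = 1) :
    IsMatching q (xiMatch a b s1 s2) := by
  intro s
  rw [xi_filter a b s1 s2 hab hs s]
  by_cases h1 : s = s1
  · subst h1; simp [hq1]
  · rw [if_neg h1]
    by_cases h2 : s = s2
    · subst h2; simp [hq2]
    · rw [if_neg h2]; simp

lemma xi_stable (a b c : I) (s1 s2 : S) (hab : a ≠ b) (hac : a ≠ c) (hbc : b ≠ c)
    (hs : s1 ≠ s2) (Pg : I → List (Option S)) (prio : S → List I) (q : S → ℕ)
    (hv : ∀ i, ValidPref (Pg i))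
    (hacca : acceptables (Pg a) = [s1, s2])
    (haccb : acceptables (Pg b) = [s1, s2])
    (haccc : acceptables (Pg c) = [s2, s1])
    (hacce : ∀ i, i ≠ a → i ≠ b → i ≠ c → acceptables (Pg i) = [])
    (hidxa : ∀ s, (prio s).idxOf a = 0)
    (hidxb : ∀ s, (prio s).idxOf b = 1)
    (hidxc : ∀ s, (prio s).idxOf c = 2)
    (hq1 : q s1 = 1) (hq2 : q s2 = 1) :
    IsStable Pg prio q (xiMatch a b s1 s2) := by
  have hxa : xiMatch a b s1 s2 a = some s1 := by simp [xiMatch]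
  have hxb : xiMatch a b s1 s2 b = some s2 := by simp [xiMatch, Ne.symm hab]
  have hxc : xiMatch a b s1 s2 c = none := by simp [xiMatch, Ne.symm hac, Ne.symm hbc]
  have hocc1 : ∀ j, xiMatch a b s1 s2 j = some s1 → j = a := by
    intro j hj
    have hm : j ∈ Finset.univ.filter (fun j => xiMatch a b s1 s2 j = some s1) :=
      Finset.mem_filter.2 ⟨Finset.mem_univ j, hj⟩
    rw [xi_filter a b s1 s2 hab hs s1, if_pos rfl] at hm
    exact Finset.mem_singleton.1 hm
  have hocc2 : ∀ j, xiMatch a b s1 s2 j = some s2 → j = b := by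
    intro j hj
    have hm : j ∈ Finset.univ.filter (fun j => xiMatch a b s1 s2 j = some s2) :=
      Finset.mem_filter.2 ⟨Finset.mem_univ j, hj⟩
    rw [xi_filter a b s1 s2 hab hs s2, if_neg (fun h => hs h.symm), if_pos rfl] at hm
    exact Finset.mem_singleton.1 hm
  have hcard1 : (Finset.univ.filter (fun j => xiMatch a b s1 s2 j = some s1)).card = 1 := by
    rw [xi_filter a b s1 s2 hab hs s1, if_pos rfl]; simp
  have hcard2 : (Finset.univ.filter (fun j => xiMatch a b s1 s2 j = some s2)).card = 1 := by
    rw [xi_filter a b s1 s2 hab hs s2, if_neg (fun h => hs h.symm), if_pos rfl]; simp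
  constructor
  · intro i
    by_cases hia : i = a
    · rw [hia, hxa]
      exact not_prefLt_none_of_mem (hv a) (by rw [hacca]; exact List.mem_cons_self)
    by_cases hib : i = b
    · rw [hib, hxb]
      exact not_prefLt_none_of_mem (hv b)
        (by rw [haccb]; exact List.mem_cons_of_mem _ (List.mem_cons_self))
    · have h1 : xiMatch a b s1 s2 i = none := by simp [xiMatch, hia, hib]
      rw [h1]; exact not_prefLt_refl _
  · rintro i ⟨s, hpref, hor⟩
    by_cases hia : i = a
    · rw [hia, hxa] at hpref
      have hs1mem : s1 ∈ acceptables (Pg a) := by rw [hacca]; exact List.mem_cons_self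
      obtain ⟨hsmem, hidx⟩ := (prefLt_some_some (hv a) hs1mem).1 hpref
      have hz : (acceptables (Pg a)).idxOf s1 = 0 := by rw [hacca]; exact idx_cons_self _ _
      omega
    by_cases hib : i = b
    · rw [hib] at hpref hor
      rw [hxb] at hpref
      have hs2mem : s2 ∈ acceptables (Pg b) := by
        rw [haccb]; exact List.mem_cons_of_mem _ (List.mem_cons_self)
      obtain ⟨hsmem, hidx⟩ := (prefLt_some_some (hv b) hs2mem).1 hpref
      rw [haccb] at hsmem
      have hone : (acceptables (Pg b)).idxOf s2 = 1 := by
        rw [haccb, idx_cons_ne _ hs, idx_cons_self]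
      rw [hone] at hidx
      have hseq : s = s1 := by
        rcases List.mem_cons.1 hsmem with rfl | hsm
        · rfl
        · exfalso
          obtain rfl : s = s2 := List.mem_singleton.1 hsm
          rw [haccb, idx_cons_ne _ hs, idx_cons_self] at hidx
          omega
      subst hseq
      rcases hor with hor | ⟨j, hj, hlt⟩
      · rw [hcard1, hq1] at hor; omega
      · obtain rfl := hocc1 j hj
        unfold prioLt at hlt
        rw [hidxa, hidxb] at hlt
        omega
    by_cases hic : i = c
    · rw [hic] at hpref hor
      rw [hxc] at hpref
      have hsmem := (prefLt_some_none (hv c)).1 hpref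
      rw [haccc] at hsmem
      rcases List.mem_cons.1 hsmem with rfl | hsm
      · rcases hor with hor | ⟨j, hj, hlt⟩
        · rw [hcard2, hq2] at hor; omega
        · obtain rfl := hocc2 j hj
          unfold prioLt at hlt
          rw [hidxc, hidxb] at hlt
          omega
      · obtain rfl : s = s1 := List.mem_singleton.1 hsm
        rcases hor with hor | ⟨j, hj, hlt⟩
        · rw [hcard1, hq1] at hor; omega
        · obtain rfl := hocc1 j hj
          unfold prioLt at hlt
          rw [hidxc, hidxa] at hlt
          omega
    · have h1 : xiMatch a b s1 s2 i = none := by simp [xiMatch, hia, hib]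
      rw [h1] at hpref
      have hsmem := (prefLt_some_none (hv i)).1 hpref
      rw [hacce i hia hib hic] at hsmem
      simp at hsmem

lemma bostonRound_accept (R : I → List (Option S)) (prio : S → List I) (q : S → ℕ)
    {μ : I → Option S} {t : ℕ} {i : I} {s : S}
    (hμ : μ i = none) (hg : (acceptables (R i))[t]? = some s)
    (hmem : i ∈ ((prio s).filter
        (fun j => decide (μ j = none ∧ (acceptables (R j))[t]? = some s))).take
        (q s - (Finset.univ.filter (fun j => μ j = some s)).card)) :
    bostonRound R prio q μ t i = some s := by
  unfold bostonRound
  rw [hμ, hg]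
  dsimp only
  rw [if_pos hmem]

theorem sdk_part2 (hIS : Fintype.card S < Fintype.card I) (k : ℕ) (hk : 1 < k)
    (hkS : k < Fintype.card S) :
    ∃ (M : Finset I) (P : I → List (Option S)) (prio : S → List I) (q : S → ℕ),
      (∀ i, ValidPref (P i)) ∧ (∀ s, ValidPrio (prio s)) ∧
      (∀ s s' : S, prio s = prio s') ∧
      IsStable P prio q
        (GS (fun i => if i ∈ M then P i else truncate (P i) k) prio q) ∧
      ∃ P' : I → List (Option S),
        NashEq (fun R => Bostonk k R prio q) P M P' ∧
        ¬ IsStable P prio q (Bostonk k P' prio q) := by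
  classical
  obtain ⟨s1, s2, hs⟩ := Fintype.exists_pair_of_one_lt_card (show 1 < Fintype.card S by omega)
  obtain ⟨T, hTsub, hT3⟩ := Finset.exists_subset_card_eq (s := (Finset.univ : Finset I)) (n := 3)
    (by rw [Finset.card_univ]; omega)
  obtain ⟨a, b, c, hab, hac, hbc, hTeq⟩ := Finset.card_eq_three.1 hT3
  -- the data
  set restS : List (Option S) := (((Finset.univ : Finset S).erase s1).erase s2).toList.map some
    with hrestS
  set Pab : List (Option S) := some s1 :: some s2 :: none :: restS with hPab
  set Pc : List (Option S) := some s2 :: some s1 :: none :: restS with hPcdef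
  set Pe : List (Option S) := none :: ((Finset.univ : Finset S).toList.map some) with hPe
  set P : I → List (Option S) :=
    fun i => if i = a then Pab else if i = b then Pab else if i = c then Pc else Pe with hP
  set restI : List I := (((Finset.univ.erase a).erase b).erase c).toList with hrestI
  set prio : S → List I := fun _ => a :: b :: c :: restI with hprio
  set q : S → ℕ := fun s => if s = s1 then 1 else if s = s2 then 1 else 0 with hq
  -- basic component facts
  have hPa : P a = Pab := by simp [hP]
  have hPb : P b = Pab := by simp [hP, Ne.symm hab]
  have hPcc : P c = Pc := by simp [hP, Ne.symm hac, Ne.symm hbc]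
  have hPee : ∀ i, i ≠ a → i ≠ b → i ≠ c → P i = Pe := by
    intro i h1 h2 h3; simp [hP, h1, h2, h3]
  have hnone_restS : (none : Option S) ∉ restS := by rw [hrestS]; simp
  have hsome_restS : ∀ s : S, some s ∈ restS ↔ (s ≠ s1 ∧ s ≠ s2) := by
    intro s
    rw [hrestS]
    simp only [List.mem_map, Finset.mem_toList, Finset.mem_erase, Finset.mem_univ, and_true,
      Option.some.injEq]
    constructor
    · rintro ⟨x, ⟨h2, h1⟩, rfl⟩
      exact ⟨h1, h2⟩
    · rintro ⟨h1, h2⟩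
      exact ⟨s, ⟨h2, h1⟩, rfl⟩
  have hnd_restS : restS.Nodup := by
    rw [hrestS]
    exact (Finset.nodup_toList _).map (Option.some_injective S)
  have hvPab : ValidPref Pab := by
    constructor
    · rw [hPab]
      refine List.nodup_cons.2 ⟨?_, List.nodup_cons.2 ⟨?_,
        List.nodup_cons.2 ⟨hnone_restS, hnd_restS⟩⟩⟩
      · intro h
        rcases List.mem_cons.1 h with h | h
        · exact hs (Option.some.inj h)
        rcases List.mem_cons.1 h with h | h
        · exact nomatch h
        · exact ((hsome_restS s1).1 h).1 rfl
      · intro h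
        rcases List.mem_cons.1 h with h | h
        · exact nomatch h
        · exact ((hsome_restS s2).1 h).2 rfl
    · intro x
      rw [hPab]
      cases x with
      | none =>
        exact List.mem_cons_of_mem _ (List.mem_cons_of_mem _ (List.mem_cons_self))
      | some s =>
        by_cases h1 : s = s1
        · rw [h1]; exact List.mem_cons_self
        by_cases h2 : s = s2
        · rw [h2]; exact List.mem_cons_of_mem _ (List.mem_cons_self)
        · exact List.mem_cons_of_mem _ (List.mem_cons_of_mem _ (List.mem_cons_of_mem _
            ((hsome_restS s).2 ⟨h1, h2⟩)))
  have hvPc : ValidPref Pc := by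
    constructor
    · rw [hPcdef]
      refine List.nodup_cons.2 ⟨?_, List.nodup_cons.2 ⟨?_,
        List.nodup_cons.2 ⟨hnone_restS, hnd_restS⟩⟩⟩
      · intro h
        rcases List.mem_cons.1 h with h | h
        · exact hs (Option.some.inj h).symm
        rcases List.mem_cons.1 h with h | h
        · exact nomatch h
        · exact ((hsome_restS s2).1 h).2 rfl
      · intro h
        rcases List.mem_cons.1 h with h | h
        · exact nomatch h
        · exact ((hsome_restS s1).1 h).1 rfl
    · intro x
      rw [hPcdef]
      cases x with
      | none =>
        exact List.mem_cons_of_mem _ (List.mem_cons_of_mem _ (List.mem_cons_self))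
      | some s =>
        by_cases h2 : s = s2
        · rw [h2]; exact List.mem_cons_self
        by_cases h1 : s = s1
        · rw [h1]; exact List.mem_cons_of_mem _ (List.mem_cons_self)
        · exact List.mem_cons_of_mem _ (List.mem_cons_of_mem _ (List.mem_cons_of_mem _
            ((hsome_restS s).2 ⟨h1, h2⟩)))
  have hvPe : ValidPref Pe := by
    constructor
    · rw [hPe]
      refine List.nodup_cons.2 ⟨?_, ?_⟩
      · intro h
        obtain ⟨x, -, hx⟩ := List.mem_map.1 h
        exact nomatch hx
      · exact (Finset.nodup_toList _).map (Option.some_injective S)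
    · intro x
      rw [hPe]
      cases x with
      | none => exact List.mem_cons_self
      | some s =>
        exact List.mem_cons_of_mem _
          (List.mem_map_of_mem (Finset.mem_toList.2 (Finset.mem_univ s)))
  have hvP : ∀ i, ValidPref (P i) := by
    intro i
    by_cases h1 : i = a
    · rw [h1, hPa]; exact hvPab
    by_cases h2 : i = b
    · rw [h2, hPb]; exact hvPab
    by_cases h3 : i = c
    · rw [h3, hPcc]; exact hvPc
    · rw [hPee i h1 h2 h3]; exact hvPe
  have haccPab : acceptables Pab = [s1, s2] := by rw [hPab]; rfl
  have haccPc : acceptables Pc = [s2, s1] := by rw [hPcdef]; rfl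
  have haccPe : acceptables Pe = [] := by rw [hPe]; rfl
  -- priorities
  have hmem_restI : ∀ i : I, i ∈ restI ↔ (i ≠ a ∧ i ≠ b ∧ i ≠ c) := by
    intro i
    rw [hrestI]
    simp only [Finset.mem_toList, Finset.mem_erase, Finset.mem_univ, and_true]
    constructor
    · rintro ⟨h3, h2, h1⟩; exact ⟨h1, h2, h3⟩
    · rintro ⟨h1, h2, h3⟩; exact ⟨h3, h2, h1⟩
  have hnd_restI : restI.Nodup := by rw [hrestI]; exact Finset.nodup_toList _
  have hvprio : ∀ s, ValidPrio (prio s) := by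
    intro s
    rw [hprio]
    constructor
    · refine List.nodup_cons.2 ⟨?_, List.nodup_cons.2 ⟨?_,
        List.nodup_cons.2 ⟨?_, hnd_restI⟩⟩⟩
      · intro h
        rcases List.mem_cons.1 h with h | h
        · exact hab h
        rcases List.mem_cons.1 h with h | h
        · exact hac h
        · exact ((hmem_restI a).1 h).1 rfl
      · intro h
        rcases List.mem_cons.1 h with h | h
        · exact hbc h
        · exact ((hmem_restI b).1 h).2.1 rfl
      · intro h
        exact ((hmem_restI c).1 h).2.2 rfl
    · intro i
      by_cases h1 : i = a
      · rw [h1]; exact List.mem_cons_self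
      by_cases h2 : i = b
      · rw [h2]; exact List.mem_cons_of_mem _ (List.mem_cons_self)
      by_cases h3 : i = c
      · rw [h3]
        exact List.mem_cons_of_mem _ (List.mem_cons_of_mem _ (List.mem_cons_self))
      · exact List.mem_cons_of_mem _ (List.mem_cons_of_mem _ (List.mem_cons_of_mem _
          ((hmem_restI i).2 ⟨h1, h2, h3⟩)))
  have hcommon : ∀ s s' : S, prio s = prio s' := by intro s s'; rw [hprio]
  have hidxa : ∀ s, (prio s).idxOf a = 0 := by
    intro s; rw [hprio]; exact idx_cons_self _ _
  have hidxb : ∀ s, (prio s).idxOf b = 1 := by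
    intro s; rw [hprio]
    rw [idx_cons_ne _ hab, idx_cons_self]
  have hidxc : ∀ s, (prio s).idxOf c = 2 := by
    intro s; rw [hprio]
    rw [idx_cons_ne _ hac, idx_cons_ne _ hbc, idx_cons_self]
  have hq1 : q s1 = 1 := by rw [hq]; dsimp only; rw [if_pos rfl]
  have hq2 : q s2 = 1 := by
    rw [hq]; dsimp only; rw [if_neg (fun h => hs h.symm), if_pos rfl]
  -- the truncated profile
  set Pt : I → List (Option S) := fun i => truncate (P i) k with hPt
  have hPta : Pt a = truncate Pab k := by rw [hPt]; dsimp only; rw [hPa]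
  have hPtb : Pt b = truncate Pab k := by rw [hPt]; dsimp only; rw [hPb]
  have hPtc : Pt c = truncate Pc k := by rw [hPt]; dsimp only; rw [hPcc]
  have hPte : ∀ i, i ≠ a → i ≠ b → i ≠ c → Pt i = truncate Pe k := by
    intro i h1 h2 h3; rw [hPt]; dsimp only; rw [hPee i h1 h2 h3]
  have haccTab : acceptables (truncate Pab k) = [s1, s2] := by
    rw [acceptables_truncate, haccPab]
    exact List.take_of_length_le (by simp; omega)
  have haccTc : acceptables (truncate Pc k) = [s2, s1] := by
    rw [acceptables_truncate, haccPc]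
    exact List.take_of_length_le (by simp; omega)
  have haccTe : acceptables (truncate Pe k) = [] := by
    rw [acceptables_truncate, haccPe]
    simp
  have hvPt : ∀ i, ValidPref (Pt i) := by
    intro i; rw [hPt]; exact validPref_truncate (hvP i) k
  -- ξ is stable under both the true and the truncated profile
  have hξP : IsStable P prio q (xiMatch a b s1 s2) :=
    xi_stable a b c s1 s2 hab hac hbc hs P prio q hvP
      (by rw [hPa, haccPab]) (by rw [hPb, haccPab]) (by rw [hPcc, haccPc])
      (fun i h1 h2 h3 => by rw [hPee i h1 h2 h3, haccPe])
      hidxa hidxb hidxc hq1 hq2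
  have hξPt : IsStable Pt prio q (xiMatch a b s1 s2) :=
    xi_stable a b c s1 s2 hab hac hbc hs Pt prio q hvPt
      (by rw [hPta, haccTab]) (by rw [hPtb, haccTab]) (by rw [hPtc, haccTc])
      (fun i h1 h2 h3 => by rw [hPte i h1 h2 h3, haccTe])
      hidxa hidxb hidxc hq1 hq2
  have hξm : IsMatching q (xiMatch a b s1 s2) := xi_matching a b s1 s2 hab hs q hq1 hq2
  have hGSeq : GS Pt prio q = xiMatch a b s1 s2 :=
    stable_unique hvPt hvprio hcommon (gs_stable Pt prio q hvPt hvprio)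
      (gs_matching Pt prio q hvPt hvprio) hξPt hξm
  -- Boston round-0 outcomes
  have h0a : (acceptables (Pt a))[0]? = some s1 := by rw [hPta, haccTab]; rfl
  have h0b : (acceptables (Pt b))[0]? = some s1 := by rw [hPtb, haccTab]; rfl
  have h0c : (acceptables (Pt c))[0]? = some s2 := by rw [hPtc, haccTc]; rfl
  have h0e : ∀ i, i ≠ a → i ≠ b → i ≠ c → (acceptables (Pt i))[0]? = none := by
    intro i h1 h2 h3; rw [hPte i h1 h2 h3, haccTe]; rfl
  have hra : bostonRound Pt prio q (fun _ => none) 0 a = some s1 := by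
    refine bostonRound_accept Pt prio q rfl h0a ?_
    have hcard0 : (Finset.filter (fun j => (none : Option S) = some s1)
        (Finset.univ : Finset I)).card = 0 := by simp
    rw [hcard0, hq1]
    simp only [hprio]
    rw [List.filter_cons_of_pos (by simp [h0a])]
    simp
  have hrc : bostonRound Pt prio q (fun _ => none) 0 c = some s2 := by
    refine bostonRound_accept Pt prio q rfl h0c ?_
    have hcard0 : (Finset.filter (fun j => (none : Option S) = some s2)
        (Finset.univ : Finset I)).card = 0 := by simp
    rw [hcard0, hq2]
    simp only [hprio]
    rw [List.filter_cons_of_neg (by simp [h0a, hs])]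
    rw [List.filter_cons_of_neg (by simp [h0b, hs])]
    rw [List.filter_cons_of_pos (by simp [h0c])]
    simp
  have hBdef : Bostonk k P prio q = Boston Pt prio q := rfl
  have hνa : Boston Pt prio q a = some s1 := by
    show (List.range (Fintype.card S)).foldl (bostonRound Pt prio q) (fun _ => none) a = some s1
    have hM : Fintype.card S = (Fintype.card S - 1) + 1 := by omega
    rw [hM, List.range_succ_eq_map, List.foldl_cons]
    exact boston_foldl_some Pt prio q _ hra
  have hνc : Boston Pt prio q c = some s2 := by
    show (List.range (Fintype.card S)).foldl (bostonRound Pt prio q) (fun _ => none) c = some s2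
    have hM : Fintype.card S = (Fintype.card S - 1) + 1 := by omega
    rw [hM, List.range_succ_eq_map, List.foldl_cons]
    exact boston_foldl_some Pt prio q _ hrc
  have hνm : IsMatching q (Boston Pt prio q) := boston_matching Pt prio q
  have hνb : Boston Pt prio q b = none := by
    cases hb : Boston Pt prio q b with
    | none => rfl
    | some s =>
      exfalso
      have hmem := boston_acceptable Pt prio q b s hb
      rw [hPtb, haccTab] at hmem
      rcases List.mem_cons.1 hmem with heq | hmem
      · rw [heq] at hb
        have h2 : ({a, b} : Finset I) ⊆ Finset.univ.filter
            (fun j => Boston Pt prio q j = some s1) := by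
          intro x hx
          rcases Finset.mem_insert.1 hx with rfl | hx
          · simp [hνa]
          · rw [Finset.mem_singleton.1 hx]; simp [hb]
        have h3 := Finset.card_le_card h2
        rw [Finset.card_insert_of_notMem (by simp [hab]), Finset.card_singleton] at h3
        have h4 := hνm s1
        rw [hq1] at h4
        omega
      · have heq : s = s2 := List.mem_singleton.1 hmem
        rw [heq] at hb
        have h2 : ({b, c} : Finset I) ⊆ Finset.univ.filter
            (fun j => Boston Pt prio q j = some s2) := by
          intro x hx
          rcases Finset.mem_insert.1 hx with rfl | hx
          · simp [hb]
          · rw [Finset.mem_singleton.1 hx]; simp [hνc]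
        have h3 := Finset.card_le_card h2
        rw [Finset.card_insert_of_notMem (by simp [hbc]), Finset.card_singleton] at h3
        have h4 := hνm s2
        rw [hq2] at h4
        omega
  have hblock : BlockingStudent P prio q (Boston Pt prio q) b := by
    have hpb : prefLt (P b) (some s2) (Boston Pt prio q b) := by
      rw [hνb, hPb]
      exact (prefLt_some_none hvPab).2
        (by rw [haccPab]; exact List.mem_cons_of_mem _ (List.mem_cons_self))
    have hpc : prioLt (prio s2) b c := by
      unfold prioLt
      rw [hidxb s2, hidxc s2]
      omega
    exact ⟨s2, hpb, Or.inr ⟨c, hνc, hpc⟩⟩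
  have hfun : (fun i => if i ∈ (∅ : Finset I) then P i else truncate (P i) k) = Pt := by
    funext i
    rw [if_neg (Finset.notMem_empty i), hPt]
  refine ⟨∅, P, prio, q, hvP, hvprio, hcommon, ?_, P, ?_, ?_⟩
  · rw [hfun, hGSeq]
    exact hξP
  · exact ⟨hvP, fun i _ => rfl, fun i hi => absurd hi (Finset.notMem_empty i)⟩
  · intro hstab
    rw [hBdef] at hstab
    exact hstab.2 b hblock

end Part2

/-- Proposition 2: for `k > 1`, more than `k` schools, common priority
and a partition of the students into sincere students and sophisticated students `M`, in
equilibrium `SD^k` is more fair by stability than `β^k`: whenever a Nash equilibrium of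
`(β^k, P)` has a stable outcome, the unique Nash equilibrium outcome
`SD(P^k_N, P_M, ≻, q)` of `(SD^k, P)` is stable; moreover there exists such a problem
where the Nash equilibrium outcome of `(SD^k, P)` is stable but some Nash equilibrium
outcome of `(β^k, P)` is not. -/
theorem sdk_more_fair_by_stability_in_equilibrium
    {I S : Type*} [Fintype I] [DecidableEq I] [Fintype S] [DecidableEq S]
    (hIS : Fintype.card S < Fintype.card I)
    (k : ℕ) (hk : 1 < k) (hkS : k < Fintype.card S) :
    (∀ (M : Finset I) (P : I → List (Option S)) (prio : S → List I) (q : S → ℕ),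
        (∀ i, ValidPref (P i)) → (∀ s, ValidPrio (prio s)) →
        (∀ s s' : S, prio s = prio s') →
        (∃ P' : I → List (Option S),
            NashEq (fun R => Bostonk k R prio q) P M P' ∧
            IsStable P prio q (Bostonk k P' prio q)) →
        IsStable P prio q
          (GS (fun i => if i ∈ M then P i else truncate (P i) k) prio q)) ∧
    (∃ (M : Finset I) (P : I → List (Option S)) (prio : S → List I) (q : S → ℕ),
        (∀ i, ValidPref (P i)) ∧ (∀ s, ValidPrio (prio s)) ∧
        (∀ s s' : S, prio s = prio s') ∧
        IsStable P prio q
          (GS (fun i => if i ∈ M then P i else truncate (P i) k) prio q) ∧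
        ∃ P' : I → List (Option S),
          NashEq (fun R => Bostonk k R prio q) P M P' ∧
          ¬ IsStable P prio q (Bostonk k P' prio q)) := by
  constructor
  · intro M P prio q hvP hvprio hcommon hex
    exact sdk_part1 k M P prio q hvP hvprio hcommon hex
  · exact sdk_part2 hIS k hk hkS

end SchoolChoice
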